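/- Let A be a Z-graded ring having non-degenerate products in degree -1, such that A^{≥0} admits a regular sequence (r, r̃) of central homogeneous elements of positive degree. Then (A^{<0})^2 = 0 and A is isomorphic to the trivial extension A^{≥0} ⋉ A^{<0}. -/

import Mathlib

/-- `A` has non-degenerate products in degree `n`. -/
def NondegProducts {A : Type} [Ring A] (𝒜 : ℤ → AddSubgroup A) (n : ℤ) : Prop :=
  ∀ i : ℤ, ∀ a ∈ 𝒜 i, a ≠ 0 →
    (∃ b ∈ 𝒜 (n - i), a * b ≠ 0) ∧ ∃ c ∈ 𝒜 (n - i), c * a ≠ 0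

/-- The subgroup of `A` of elements supported in degrees belonging to `S`. -/
def gradedPart {A : Type} [Ring A] (𝒜 : ℤ → AddSubgroup A) (S : Set ℤ) : AddSubgroup A :=
  ⨆ i ∈ S, 𝒜 i

section Helpers

variable {A : Type} [Ring A] (𝒜 : ℤ → AddSubgroup A)

theorem mem_gradedPart_of {S : Set ℤ} {i : ℤ} (hi : i ∈ S) {a : A} (ha : a ∈ 𝒜 i) :
    a ∈ gradedPart 𝒜 S := by
  have h : 𝒜 i ≤ gradedPart 𝒜 S := le_iSup₂ (f := fun i (_ : i ∈ S) => 𝒜 i) i hi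
  exact h ha

theorem gradedPart_induction {S : Set ℤ} {C : A → Prop} {x : A} (hx : x ∈ gradedPart 𝒜 S)
    (mem : ∀ i ∈ S, ∀ a ∈ 𝒜 i, C a) (zero : C 0)
    (add : ∀ a b, C a → C b → C (a + b)) : C x := by
  refine AddSubgroup.iSup_induction (C := C) (fun i => ⨆ _ : i ∈ S, 𝒜 i) hx ?_ zero add
  intro i a ha
  have ha' : a ∈ ⨆ _ : i ∈ S, 𝒜 i := ha
  by_cases h : i ∈ S
  · rw [iSup_pos h] at ha'; exact mem i h a ha'
  · rw [iSup_neg h] at ha'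
    rw [AddSubgroup.mem_bot.mp ha']; exact zero

open DirectSum

theorem decompose_eq_zero_of_mem_gradedPart [GradedRing 𝒜] {S : Set ℤ} {x : A}
    (hx : x ∈ gradedPart 𝒜 S) {n : ℤ} (hn : n ∉ S) : (decompose 𝒜 x n : A) = 0 := by
  refine gradedPart_induction 𝒜 (C := fun x => (decompose 𝒜 x n : A) = 0) hx ?_ ?_ ?_
  · intro i hi a ha
    exact decompose_of_mem_ne 𝒜 ha (fun h => hn (h ▸ hi))
  · simp
  · intro a b ha hb
    rw [decompose_add]
    simp [DirectSum.add_apply, ha, hb]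

end Helpers

set_option maxHeartbeats 2000000 in
/-- If `A` is a `ℤ`-graded ring with non-degenerate products in degree
`-1` and `A^{≥0}` admits a regular sequence `(r, r̃)` of central homogeneous elements of
positive degree, then `(A^{<0})² = 0` and `A` is the trivial extension `A^{≥0} ⋉ A^{<0}`:
`A^{<0}` is a square-zero two-sided ideal, `A^{≥0}` is a subring, and
`A = A^{≥0} ⊕ A^{<0}` additively, with multiplication determined accordingly. -/
theorem trivial_extension_of_depth_two {A : Type} [Ring A]
    (𝒜 : ℤ → AddSubgroup A) [GradedRing 𝒜]
    (hnd : NondegProducts 𝒜 (-1))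
    (r rt : A) (d dt : ℤ) (hd : 0 < d) (hdt : 0 < dt)
    (hr : r ∈ 𝒜 d) (hrt : rt ∈ 𝒜 dt)
    (hcr : ∀ x : A, r * x = x * r) (hcrt : ∀ x : A, rt * x = x * rt)
    (hreg1 : ∀ a ∈ gradedPart 𝒜 {i | 0 ≤ i}, r * a = 0 → a = 0)
    (hreg2 : ∀ a ∈ gradedPart 𝒜 {i | 0 ≤ i},
      (∃ b ∈ gradedPart 𝒜 {i | 0 ≤ i}, rt * a = r * b) →
      ∃ c ∈ gradedPart 𝒜 {i | 0 ≤ i}, a = r * c) :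
    -- `(A^{<0})² = 0`
    (∀ a ∈ gradedPart 𝒜 {i | i < 0}, ∀ b ∈ gradedPart 𝒜 {i | i < 0}, a * b = 0) ∧
    -- `A^{<0}` is a two-sided ideal
    (∀ x : A, ∀ b ∈ gradedPart 𝒜 {i | i < 0},
      x * b ∈ gradedPart 𝒜 {i | i < 0} ∧ b * x ∈ gradedPart 𝒜 {i | i < 0}) ∧
    -- `A = A^{≥0} ⊕ A^{<0}` additively
    (∀ x : A, ∃ y ∈ gradedPart 𝒜 {i | 0 ≤ i}, ∃ z ∈ gradedPart 𝒜 {i | i < 0},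
      x = y + z) ∧
    (∀ y ∈ gradedPart 𝒜 {i | 0 ≤ i}, ∀ z ∈ gradedPart 𝒜 {i | i < 0},
      y + z = 0 → y = 0 ∧ z = 0) := by
  classical
  have hd1 : (1 : ℤ) ≤ d := hd
  have hdt1 : (1 : ℤ) ≤ dt := hdt
  -- commuting powers
  have hcrn : ∀ (n : ℕ) (x : A), r ^ n * x = x * r ^ n :=
    fun n x => ((show Commute r x from hcr x).pow_left n).eq
  -- r^n is regular on homogeneous elements of nonnegative degree
  have regpow : ∀ (n : ℕ) (s : ℤ) (a : A), a ∈ 𝒜 s → 0 ≤ s → r ^ n * a = 0 → a = 0 := by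
    intro n
    induction n with
    | zero => intro s a _ _ h; simpa using h
    | succ n ih =>
      intro s a ha hs h
      have h' : r ^ n * (r * a) = 0 := by rw [← mul_assoc, ← pow_succ]; exact h
      have hra : r * a ∈ 𝒜 (d + s) := SetLike.mul_mem_graded hr ha
      have h2 : r * a = 0 := ih (d + s) (r * a) hra (by linarith) h'
      exact hreg1 a (mem_gradedPart_of 𝒜 (S := {i : ℤ | 0 ≤ i}) hs ha) h2
  -- multiplication by rt preserves the nonnegative part
  have hmulBrt : ∀ a ∈ gradedPart 𝒜 {i : ℤ | 0 ≤ i}, rt * a ∈ gradedPart 𝒜 {i : ℤ | 0 ≤ i} := by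
    intro a ha
    refine gradedPart_induction 𝒜 (C := fun a => rt * a ∈ gradedPart 𝒜 {i : ℤ | 0 ≤ i}) ha ?_ ?_ ?_
    · intro i hi a' ha'
      exact mem_gradedPart_of 𝒜 (S := {i : ℤ | 0 ≤ i}) (show dt + i ∈ {i : ℤ | 0 ≤ i} from by
        have h0i : (0:ℤ) ≤ i := hi
        simp only [Set.mem_setOf_eq]; linarith) (SetLike.mul_mem_graded hrt ha')
    · show rt * 0 ∈ gradedPart 𝒜 {i : ℤ | 0 ≤ i}
      rw [mul_zero]; exact zero_mem _
    · intro a' b' h1 h2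
      show rt * (a' + b') ∈ gradedPart 𝒜 {i : ℤ | 0 ≤ i}
      rw [mul_add]; exact add_mem h1 h2
  -- division lemma from regularity of rt mod r
  have div : ∀ (k : ℕ) (a : A), a ∈ gradedPart 𝒜 {i : ℤ | 0 ≤ i} →
      (∃ b ∈ gradedPart 𝒜 {i : ℤ | 0 ≤ i}, rt ^ k * a = r * b) →
      ∃ c ∈ gradedPart 𝒜 {i : ℤ | 0 ≤ i}, a = r * c := by
    intro k
    induction k with
    | zero =>
      rintro a _ ⟨b, hb, h⟩
      exact ⟨b, hb, by simpa using h⟩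
    | succ k ih =>
      rintro a haB ⟨b, hb, h⟩
      obtain ⟨c, hc, hca⟩ := ih (rt * a) (hmulBrt a haB)
        ⟨b, hb, by rw [← mul_assoc, ← pow_succ]; exact h⟩
      exact hreg2 a haB ⟨c, hc, hca⟩
  -- multiplication by r shifts degrees up by d
  have hrBshift : ∀ c ∈ gradedPart 𝒜 {i : ℤ | 0 ≤ i}, r * c ∈ gradedPart 𝒜 {i : ℤ | d ≤ i} := by
    intro c hc
    refine gradedPart_induction 𝒜 (C := fun c => r * c ∈ gradedPart 𝒜 {i : ℤ | d ≤ i}) hc ?_ ?_ ?_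
    · intro i hi c' hc'
      exact mem_gradedPart_of 𝒜 (S := {i : ℤ | d ≤ i}) (show d + i ∈ {i : ℤ | d ≤ i} from by
        have h0i : (0:ℤ) ≤ i := hi
        simp only [Set.mem_setOf_eq]; linarith) (SetLike.mul_mem_graded hr hc')
    · show r * 0 ∈ gradedPart 𝒜 {i : ℤ | d ≤ i}
      rw [mul_zero]; exact zero_mem _
    · intro a' b' h1 h2
      show r * (a' + b') ∈ gradedPart 𝒜 {i : ℤ | d ≤ i}
      rw [mul_add]; exact add_mem h1 h2
  -- key claim C1
  have C1 : ∀ (j : ℤ) (v : A), v ∈ 𝒜 j → j < 0 → 0 ≤ j + d → r * v = 0 := by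
    intro j v hv hj hjd
    set k : ℕ := (-j).toNat with hkdef
    have hkj : (k : ℤ) = -j := Int.toNat_of_nonneg (by linarith)
    have hkd : (k : ℤ) ≤ (k : ℤ) * dt :=
      le_mul_of_one_le_right (Int.natCast_nonneg k) hdt1
    have hrtk : rt ^ k ∈ 𝒜 (k • dt) := SetLike.pow_mem_graded k hrt
    have hsm : (k • dt : ℤ) = (k : ℤ) * dt := nsmul_eq_mul k dt
    have htv : rt ^ k * v ∈ 𝒜 (k • dt + j) := SetLike.mul_mem_graded hrtk hv
    have htvB : rt ^ k * v ∈ gradedPart 𝒜 {i : ℤ | 0 ≤ i} :=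
      mem_gradedPart_of 𝒜 (S := {i : ℤ | 0 ≤ i}) (show k • dt + j ∈ {i : ℤ | 0 ≤ i} from by
        simp only [Set.mem_setOf_eq]; rw [hsm]; linarith) htv
    have heq : rt ^ k * (r * v) = r * (rt ^ k * v) := by
      rw [← mul_assoc, ((show Commute rt r from hcrt r).pow_left k).eq, mul_assoc]
    have hrvB : r * v ∈ gradedPart 𝒜 {i : ℤ | 0 ≤ i} :=
      mem_gradedPart_of 𝒜 (S := {i : ℤ | 0 ≤ i}) (show d + j ∈ {i : ℤ | 0 ≤ i} from by
        simp only [Set.mem_setOf_eq]; linarith) (SetLike.mul_mem_graded hr hv)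
    obtain ⟨c, hcB, hrc⟩ := div k (r * v) hrvB ⟨rt ^ k * v, htvB, heq⟩
    have h1 : r * v ∈ gradedPart 𝒜 {i : ℤ | d ≤ i} := hrc ▸ hrBshift c hcB
    have h2 : (DirectSum.decompose 𝒜 (r * v) (d + j) : A) = r * v :=
      DirectSum.decompose_of_mem_same 𝒜 (SetLike.mul_mem_graded hr hv)
    have h3 : (DirectSum.decompose 𝒜 (r * v) (d + j) : A) = 0 :=
      decompose_eq_zero_of_mem_gradedPart 𝒜 h1
        (show d + j ∉ {i : ℤ | d ≤ i} from by
          simp only [Set.mem_setOf_eq, not_le]; linarith)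
    rw [← h2, h3]
  -- iterated claim
  have Cn : ∀ (n : ℕ) (j : ℤ) (v : A), v ∈ 𝒜 j → j < 0 → 0 ≤ j + (n : ℤ) * d →
      r ^ n * v = 0 := by
    intro n
    induction n with
    | zero => intro j v _ hj h0; simp at h0; omega
    | succ n ih =>
      intro j v hv hj h0
      by_cases h : 0 ≤ j + (n : ℤ) * d
      · have h1 := ih j v hv hj h
        rw [pow_succ', mul_assoc, h1, mul_zero]
      · push_neg at h
        have hv' : r ^ n * v ∈ 𝒜 (n • d + j) :=
          SetLike.mul_mem_graded (SetLike.pow_mem_graded n hr) hv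
        have hsm : (n • d : ℤ) = (n : ℤ) * d := nsmul_eq_mul n d
        have hlt : (n • d + j : ℤ) < 0 := by rw [hsm]; linarith
        have hge : (0:ℤ) ≤ (n • d + j) + d := by
          rw [hsm]; push_cast at h0; linarith
        have h1 := C1 (n • d + j) (r ^ n * v) hv' hlt hge
        rw [pow_succ', mul_assoc, h1]
  -- P1: products of nonnegative with negative degree landing in degree ≥ 0 vanish
  have P1 : ∀ (i j : ℤ) (u v : A), u ∈ 𝒜 i → v ∈ 𝒜 j → 0 ≤ i → j < 0 → 0 ≤ i + j →
      u * v = 0 ∧ v * u = 0 := by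
    intro i j u v hu hv hi hj hij
    set n : ℕ := (-j).toNat with hndef
    have hn : (n : ℤ) = -j := Int.toNat_of_nonneg (by linarith)
    have hnd' : (n : ℤ) ≤ (n : ℤ) * d := le_mul_of_one_le_right (Int.natCast_nonneg n) hd1
    have h0 : 0 ≤ j + (n : ℤ) * d := by linarith
    have hv0 : r ^ n * v = 0 := Cn n j v hv hj h0
    constructor
    · have he : r ^ n * (u * v) = 0 := by
        rw [← mul_assoc, hcrn n u, mul_assoc, hv0, mul_zero]
      exact regpow n (i + j) (u * v) (SetLike.mul_mem_graded hu hv) hij he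
    · have he : r ^ n * (v * u) = 0 := by rw [← mul_assoc, hv0, zero_mul]
      exact regpow n (j + i) (v * u) (SetLike.mul_mem_graded hv hu) (by linarith) he
  -- P2: products of two negative-degree elements vanish
  have P2 : ∀ (i j : ℤ) (u v : A), u ∈ 𝒜 i → v ∈ 𝒜 j → i < 0 → j < 0 → u * v = 0 := by
    intro i j u v hu hv hi hj
    by_contra h
    obtain ⟨-, c, hc, hcne⟩ := hnd (i + j) (u * v) (SetLike.mul_mem_graded hu hv) h
    have hcu : c * u = 0 :=
      (P1 (-1 - (i + j)) i c u hc hu (by omega) hi (by omega)).1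
    exact hcne (by rw [← mul_assoc, hcu, zero_mul])
  refine ⟨?_, ?_, ?_, ?_⟩
  · -- squares of the negative part vanish
    intro a ha b hb
    refine gradedPart_induction 𝒜 (C := fun a => a * b = 0) ha ?_ ?_ ?_
    · intro i hi a' ha'
      refine gradedPart_induction 𝒜 (C := fun b => a' * b = 0) hb ?_ ?_ ?_
      · intro j hj b' hb'
        exact P2 i j a' b' ha' hb' hi hj
      · exact mul_zero _
      · intro x y hx hy
        show a' * (x + y) = 0
        rw [mul_add, hx, hy, add_zero]
    · exact zero_mul b
    · intro x y hx hy
      show (x + y) * b = 0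
      rw [add_mul, hx, hy, add_zero]
  · -- two-sided ideal
    intro x b hb
    revert x
    refine gradedPart_induction 𝒜
      (C := fun b => ∀ x : A, x * b ∈ gradedPart 𝒜 {i : ℤ | i < 0} ∧
        b * x ∈ gradedPart 𝒜 {i : ℤ | i < 0}) hb ?_ ?_ ?_
    · intro j hj b' hb'
      have hj' : j < 0 := hj
      refine DirectSum.Decomposition.inductionOn 𝒜
        (motive := fun x => x * b' ∈ gradedPart 𝒜 {i : ℤ | i < 0} ∧
          b' * x ∈ gradedPart 𝒜 {i : ℤ | i < 0}) ?_ ?_ ?_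
      · show (0:A) * b' ∈ gradedPart 𝒜 {i : ℤ | i < 0} ∧ b' * (0:A) ∈ gradedPart 𝒜 {i : ℤ | i < 0}
        rw [zero_mul, mul_zero]; exact ⟨zero_mem _, zero_mem _⟩
      · intro i m
        show (m : A) * b' ∈ gradedPart 𝒜 {i : ℤ | i < 0} ∧
          b' * (m : A) ∈ gradedPart 𝒜 {i : ℤ | i < 0}
        by_cases hij : i + j < 0
        · exact ⟨mem_gradedPart_of 𝒜 (S := {i : ℤ | i < 0})
              (show i + j ∈ {i : ℤ | i < 0} from hij) (SetLike.mul_mem_graded m.2 hb'),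
            mem_gradedPart_of 𝒜 (S := {i : ℤ | i < 0})
              (show j + i ∈ {i : ℤ | i < 0} from by simp only [Set.mem_setOf_eq]; omega)
              (SetLike.mul_mem_graded hb' m.2)⟩
        · push_neg at hij
          have hi : (0:ℤ) ≤ i := by omega
          obtain ⟨h1, h2⟩ := P1 i j (m : A) b' m.2 hb' hi hj' hij
          rw [h1, h2]; exact ⟨zero_mem _, zero_mem _⟩
      · intro m m' h1 h2
        show (m + m') * b' ∈ gradedPart 𝒜 {i : ℤ | i < 0} ∧
          b' * (m + m') ∈ gradedPart 𝒜 {i : ℤ | i < 0}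
        rw [add_mul, mul_add]
        exact ⟨add_mem h1.1 h2.1, add_mem h1.2 h2.2⟩
    · intro x
      show x * 0 ∈ gradedPart 𝒜 {i : ℤ | i < 0} ∧ (0:A) * x ∈ gradedPart 𝒜 {i : ℤ | i < 0}
      rw [mul_zero, zero_mul]; exact ⟨zero_mem _, zero_mem _⟩
    · intro b1 b2 h1 h2 x
      show x * (b1 + b2) ∈ gradedPart 𝒜 {i : ℤ | i < 0} ∧
        (b1 + b2) * x ∈ gradedPart 𝒜 {i : ℤ | i < 0}
      rw [mul_add, add_mul]
      exact ⟨add_mem (h1 x).1 (h2 x).1, add_mem (h1 x).2 (h2 x).2⟩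
  · -- additive decomposition exists
    intro x
    refine DirectSum.Decomposition.inductionOn 𝒜
      (motive := fun x => ∃ y ∈ gradedPart 𝒜 {i : ℤ | 0 ≤ i},
        ∃ z ∈ gradedPart 𝒜 {i : ℤ | i < 0}, x = y + z) ?_ ?_ ?_ x
    · exact ⟨0, zero_mem _, 0, zero_mem _, (add_zero 0).symm⟩
    · intro i m
      show ∃ y ∈ gradedPart 𝒜 {i : ℤ | 0 ≤ i}, ∃ z ∈ gradedPart 𝒜 {i : ℤ | i < 0},
        (m : A) = y + z
      rcases le_or_gt 0 i with h | h
      · exact ⟨m, mem_gradedPart_of 𝒜 (S := {i : ℤ | 0 ≤ i}) h m.2, 0, zero_mem _,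
          (add_zero _).symm⟩
      · exact ⟨0, zero_mem _, m, mem_gradedPart_of 𝒜 (S := {i : ℤ | i < 0}) h m.2,
          (zero_add _).symm⟩
    · intro m m' hm hm'
      obtain ⟨y, hy, z, hz, hmeq⟩ := hm
      obtain ⟨y', hy', z', hz', hmeq'⟩ := hm'
      refine ⟨y + y', add_mem hy hy', z + z', add_mem hz hz', ?_⟩
      show m + m' = y + y' + (z + z')
      rw [hmeq, hmeq']; abel
  · -- the decomposition is unique
    intro y hy z hz h
    have hy0 : y = 0 := by
      have hcomp : ∀ n : ℤ, (DirectSum.decompose 𝒜 y n : A) = 0 := by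
        intro n
        rcases lt_or_ge n 0 with hn | hn
        · exact decompose_eq_zero_of_mem_gradedPart 𝒜 hy
            (show n ∉ {i : ℤ | 0 ≤ i} from by
              simp only [Set.mem_setOf_eq, not_le]; exact hn)
        · have hz' : (DirectSum.decompose 𝒜 z n : A) = 0 :=
            decompose_eq_zero_of_mem_gradedPart 𝒜 hz
              (show n ∉ {i : ℤ | i < 0} from by
                simp only [Set.mem_setOf_eq, not_lt]; exact hn)
          have h' := congrArg (fun w => (DirectSum.decompose 𝒜 w n : A)) h
          simp only [DirectSum.decompose_add, DirectSum.add_apply, DirectSum.decompose_zero,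
            DirectSum.zero_apply, AddSubgroup.coe_add, ZeroMemClass.coe_zero] at h'
          rw [hz', add_zero] at h'
          exact h'
      have hsum := (DirectSum.sum_support_decompose 𝒜 y).symm
      rw [hsum]
      exact Finset.sum_eq_zero fun n _ => hcomp n
    have hz0 : z = 0 := by rw [hy0, zero_add] at h; exact h
    exact ⟨hy0, hz0⟩
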